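/- The map (w, A) ↦ R(w, A) = E[‖X − μ‖_w² − min_{a∈A} ‖X − a‖_w²] is continuous on the space of pairs (w, A) where w ranges over nonnegative weight vectors in ℝ^p and A over finite sets of K points in ℝ^p, with metric d((w₁,A₁),(w₂,A₂)) = max{‖w₁ − w₂‖, d_H(A₁,A₂)}, where d_H is the Hausdorff metric; here X is a random vector in ℝ^p with E‖X‖² < ∞ and mean μ. -/

import Mathlib

open MeasureTheory Metric TopologicalSpace

/-- Continuity of a parametrized infimum over nonempty compact sets
(with the Hausdorff metric). -/
theorem cont_sInf_param {P E : Type*} [MetricSpace P] [ProperSpace P] [MetricSpace E] [ProperSpace E]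
    (f : P × E → ℝ) (hf : Continuous f) :
    Continuous fun q : P × NonemptyCompacts E => sInf ((fun a => f (q.1, a)) '' (q.2 : Set E)) := by
  rw [Metric.continuous_iff]
  rintro ⟨p₀, A₀⟩ ε hε
  set S : Set E := cthickening 1 (A₀ : Set E) with hS
  have hScomp : IsCompact S := A₀.isCompact.cthickening
  have hA₀S : (A₀ : Set E) ⊆ S := self_subset_cthickening _
  have hKcomp : IsCompact (closedBall p₀ 1 ×ˢ S) := (isCompact_closedBall p₀ 1).prod hScomp
  have hUC : UniformContinuousOn f (closedBall p₀ 1 ×ˢ S) :=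
    hKcomp.uniformContinuousOn_of_continuous hf.continuousOn
  rw [Metric.uniformContinuousOn_iff] at hUC
  obtain ⟨δ, hδpos, hδ⟩ := hUC (ε/2) (by positivity)
  set r : ℝ := min (min δ 1) (1/2) with hr
  refine ⟨r, by positivity, ?_⟩
  rintro ⟨p, A⟩ hdist
  rw [Prod.dist_eq] at hdist
  have hdp : dist p p₀ < r := (le_max_left _ _).trans_lt hdist
  have hdA : dist A A₀ < r := (le_max_right _ _).trans_lt hdist
  have hrδ : r ≤ δ := (min_le_left _ _).trans (min_le_left _ _)
  have hr1 : r ≤ 1 := (min_le_left _ _).trans (min_le_right _ _)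
  have hpball : p ∈ closedBall p₀ 1 := le_of_lt (hdp.trans_le hr1)
  have hp₀ball : p₀ ∈ closedBall p₀ 1 := mem_closedBall_self zero_le_one
  have hAA₀ : hausdorffDist (A : Set E) (A₀ : Set E) < r := by
    rw [← NonemptyCompacts.dist_eq]; exact hdA
  have hA₀A : hausdorffDist (A₀ : Set E) (A : Set E) < r := by
    rwa [hausdorffDist_comm]
  have hetop : EMetric.hausdorffEdist (A : Set E) (A₀ : Set E) ≠ ⊤ :=
    Metric.hausdorffEdist_ne_top_of_nonempty_of_bounded A.nonempty A₀.nonempty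
      A.isCompact.isBounded A₀.isCompact.isBounded
  have hetop' : EMetric.hausdorffEdist (A₀ : Set E) (A : Set E) ≠ ⊤ := by
    rw [EMetric.hausdorffEdist, Metric.hausdorffEDist_comm]; exact hetop
  set I : Set ℝ := (fun a => f (p, a)) '' (A : Set E) with hI
  set I₀ : Set ℝ := (fun a => f (p₀, a)) '' (A₀ : Set E) with hI₀
  have hIne : I.Nonempty := A.nonempty.image _
  have hI₀ne : I₀.Nonempty := A₀.nonempty.image _
  have hIbdd : BddBelow I :=
    (A.isCompact.image (hf.comp (Continuous.prodMk_right p))).bddBelow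
  have hI₀bdd : BddBelow I₀ :=
    (A₀.isCompact.image (hf.comp (Continuous.prodMk_right p₀))).bddBelow
  -- lower bound: sInf I₀ - ε/2 ≤ sInf I
  have hlow : sInf I₀ - ε/2 ≤ sInf I := by
    apply le_csInf hIne
    rintro b ⟨a, ha, rfl⟩
    obtain ⟨a₀, ha₀, hda₀⟩ := A₀.isCompact.exists_infDist_eq_dist A₀.nonempty a
    have hda : dist a a₀ < r := by
      rw [← hda₀]
      exact (infDist_le_hausdorffDist_of_mem ha hetop).trans_lt hAA₀
    have haS : a ∈ S := mem_cthickening_of_dist_le a a₀ 1 _ ha₀ (le_of_lt (hda.trans_le hr1))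
    have hclose : dist (f (p, a)) (f (p₀, a₀)) < ε/2 := by
      apply hδ (p, a) ⟨hpball, haS⟩ (p₀, a₀) ⟨hp₀ball, hA₀S ha₀⟩
      rw [Prod.dist_eq]
      exact max_lt (hdp.trans_le hrδ) (hda.trans_le hrδ)
    have h1 : f (p₀, a₀) - ε/2 ≤ f (p, a) := by
      rw [Real.dist_eq, abs_sub_lt_iff] at hclose
      linarith [hclose.2]
    exact le_trans (by linarith [csInf_le hI₀bdd (Set.mem_image_of_mem _ ha₀)]) h1
  -- upper bound: sInf I ≤ sInf I₀ + ε/2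
  have hupp : sInf I - ε/2 ≤ sInf I₀ := by
    apply le_csInf hI₀ne
    rintro b ⟨a₀, ha₀, rfl⟩
    obtain ⟨a, ha, hda⟩ := A.isCompact.exists_infDist_eq_dist A.nonempty a₀
    have hda' : dist a₀ a < r := by
      rw [← hda]
      exact (infDist_le_hausdorffDist_of_mem ha₀ hetop').trans_lt hA₀A
    have haS : a ∈ S := mem_cthickening_of_dist_le a a₀ 1 _ ha₀
      (by rw [dist_comm]; exact le_of_lt (hda'.trans_le hr1))
    have hclose : dist (f (p, a)) (f (p₀, a₀)) < ε/2 := by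
      apply hδ (p, a) ⟨hpball, haS⟩ (p₀, a₀) ⟨hp₀ball, hA₀S ha₀⟩
      rw [Prod.dist_eq]
      refine max_lt (hdp.trans_le hrδ) ?_
      rw [dist_comm]; exact hda'.trans_le hrδ
    have h1 : f (p, a) ≤ f (p₀, a₀) + ε/2 := by
      rw [Real.dist_eq, abs_sub_lt_iff] at hclose
      linarith [hclose.1]
    linarith [csInf_le hIbdd (Set.mem_image_of_mem (fun a => f (p, a)) ha)]
  rw [Real.dist_eq, abs_sub_lt_iff]
  constructor <;> linarith

set_option maxHeartbeats 1000000 in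
/-- Continuity of the sparse K-means clustering risk `(w, A) ↦ R(w, A)` on pairs of a
nonnegative weight vector and a set of `K` points (with the Hausdorff metric on sets). -/
theorem risk_continuous {p K : ℕ} {Ω : Type*} [MeasureSpace Ω]
    [IsProbabilityMeasure (volume : Measure Ω)]
    (X : Ω → Fin p → ℝ) (hX : Measurable X)
    (hX2 : Integrable (fun ω => ∑ j, (X ω j) ^ 2) (volume : Measure Ω))
    (μv : Fin p → ℝ) (hμv : ∀ j, μv j = ∫ ω, X ω j) :
    ContinuousOn
      (fun θ : (Fin p → ℝ) × TopologicalSpace.NonemptyCompacts (Fin p → ℝ) =>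
        ∫ ω, ((∑ j, θ.1 j * (X ω j - μv j) ^ 2) -
          sInf ((fun a => ∑ j, θ.1 j * (X ω j - a j) ^ 2) '' (θ.2 : Set (Fin p → ℝ)))))
      {θ | (∀ j, 0 ≤ θ.1 j) ∧ (θ.2 : Set (Fin p → ℝ)).ncard = K} := by
  -- joint continuity of the integrand
  have h1 : Continuous fun q : ((Fin p → ℝ) × NonemptyCompacts (Fin p → ℝ)) × (Fin p → ℝ) =>
      ∑ j, q.1.1 j * (q.2 j - μv j) ^ 2 := by
    apply continuous_finset_sum
    intro j _
    exact ((continuous_apply j).comp (continuous_fst.comp continuous_fst)).mul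
      ((((continuous_apply j).comp continuous_snd).sub continuous_const).pow 2)
  have hfcont : Continuous (fun z : ((Fin p → ℝ) × (Fin p → ℝ)) × (Fin p → ℝ) =>
      ∑ j, z.1.1 j * (z.1.2 j - z.2 j) ^ 2) := by
    apply continuous_finset_sum
    intro j _
    exact ((continuous_apply j).comp (continuous_fst.comp continuous_fst)).mul
      ((((continuous_apply j).comp (continuous_snd.comp continuous_fst)).sub
        ((continuous_apply j).comp continuous_snd)).pow 2)
  have h2' := cont_sInf_param _ hfcont
  have h2 : Continuous fun q : ((Fin p → ℝ) × NonemptyCompacts (Fin p → ℝ)) × (Fin p → ℝ) =>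
      sInf ((fun a => ∑ j, q.1.1 j * (q.2 j - a j) ^ 2) '' (q.1.2 : Set (Fin p → ℝ))) := by
    exact h2'.comp (((continuous_fst.comp continuous_fst).prodMk continuous_snd).prodMk
      (continuous_snd.comp continuous_fst))
  have hGcont : Continuous fun q : ((Fin p → ℝ) × NonemptyCompacts (Fin p → ℝ)) × (Fin p → ℝ) =>
      (∑ j, q.1.1 j * (q.2 j - μv j) ^ 2) -
        sInf ((fun a => ∑ j, q.1.1 j * (q.2 j - a j) ^ 2) '' (q.1.2 : Set (Fin p → ℝ))) := h1.sub h2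
  apply Continuous.continuousOn
  rw [continuous_iff_continuousAt]
  rintro ⟨w₀, A₀⟩
  -- constants for the bound
  obtain ⟨R, hR⟩ := (A₀.isCompact.cthickening (r := 1)).isBounded.subset_closedBall 0
  set M : ℝ := R ^ 2 + ∑ j, μv j ^ 2 with hM
  have hMμ : ∀ j, μv j ^ 2 ≤ M := by
    intro j
    have : μv j ^ 2 ≤ ∑ i, μv i ^ 2 :=
      Finset.single_le_sum (f := fun i => μv i ^ 2) (fun i _ => sq_nonneg (μv i)) (Finset.mem_univ j)
    have hRz : (0:ℝ) ≤ R ^ 2 := sq_nonneg R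
    rw [hM]; linarith
  have hMa : ∀ a ∈ Metric.cthickening 1 (A₀ : Set (Fin p → ℝ)), ∀ j, a j ^ 2 ≤ M := by
    intro a ha j
    have h1 : ‖a j‖ ≤ ‖a‖ := norm_le_pi_norm a j
    have h2 : ‖a‖ ≤ R := by
      have := hR ha
      rwa [Metric.mem_closedBall, dist_zero_right] at this
    have h3 : |a j| ≤ R := le_trans h1 h2
    have : a j ^ 2 ≤ R ^ 2 := by nlinarith [abs_nonneg (a j), sq_abs (a j)]
    have h4 : (0:ℝ) ≤ ∑ i, μv i ^ 2 := Finset.sum_nonneg fun i _ => sq_nonneg _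
    linarith
  set W : ℝ := (∑ j, |w₀ j|) + 1 with hW
  have hWpos : 0 < W := by
    have : (0:ℝ) ≤ ∑ j, |w₀ j| := Finset.sum_nonneg fun j _ => abs_nonneg _
    linarith
  have hM0 : 0 ≤ M := by rw [hM]; positivity
  -- pointwise bound for weighted sums of squares
  have hsum_bound : ∀ w : Fin p → ℝ, (∀ j, |w j| ≤ W) → ∀ x c : (Fin p → ℝ), (∀ j, c j ^ 2 ≤ M) →
      |∑ j, w j * (x j - c j) ^ 2| ≤ 2 * W * (∑ j, x j ^ 2) + 2 * W * M * p := by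
    intro w hw x c hc
    calc |∑ j, w j * (x j - c j) ^ 2| ≤ ∑ j, |w j * (x j - c j) ^ 2| :=
        Finset.abs_sum_le_sum_abs _ _
      _ ≤ ∑ j : Fin p, (2 * W * x j ^ 2 + 2 * W * M) := by
        apply Finset.sum_le_sum
        intro j _
        rw [abs_mul, abs_of_nonneg (sq_nonneg (x j - c j))]
        have hone : (x j - c j) ^ 2 ≤ 2 * x j ^ 2 + 2 * M := by
          nlinarith [hc j, sq_nonneg (x j + c j)]
        nlinarith [hw j, abs_nonneg (w j), sq_nonneg (x j - c j), hWpos]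
      _ = 2 * W * (∑ j, x j ^ 2) + 2 * W * M * p := by
        rw [Finset.sum_add_distrib, ← Finset.mul_sum, Finset.sum_const, Finset.card_univ,
          Fintype.card_fin, nsmul_eq_mul]
        ring
  apply MeasureTheory.continuousAt_of_dominated
    (bound := fun ω => 4 * W * (∑ j, X ω j ^ 2) + 4 * W * M * p)
  · -- measurability
    apply Filter.Eventually.of_forall
    intro θ
    have hc : Continuous fun x : (Fin p → ℝ) => (∑ j, θ.1 j * (x j - μv j) ^ 2) -
        sInf ((fun a => ∑ j, θ.1 j * (x j - a j) ^ 2) '' (θ.2 : Set (Fin p → ℝ))) :=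
      hGcont.comp (Continuous.prodMk_right θ)
    exact (hc.measurable.comp hX).aestronglyMeasurable
  · -- the domination
    have hball : Metric.ball (w₀, A₀) 1 ∈ nhds (w₀, A₀) := Metric.ball_mem_nhds _ one_pos
    filter_upwards [hball] with θ hθ
    apply Filter.Eventually.of_forall
    intro ω
    rw [Metric.mem_ball, Prod.dist_eq] at hθ
    have hθ1 : dist θ.1 w₀ < 1 := (le_max_left _ _).trans_lt hθ
    have hθ2 : dist θ.2 A₀ < 1 := (le_max_right _ _).trans_lt hθ
    have hwles : ∀ j, |θ.1 j| ≤ W := by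
      intro j
      have hd1 : dist (θ.1 j) (w₀ j) ≤ dist θ.1 w₀ := dist_le_pi_dist _ _ j
      have hd2 : |θ.1 j - w₀ j| < 1 := by rw [← Real.dist_eq]; exact hd1.trans_lt hθ1
      have hd3 : |w₀ j| ≤ ∑ i, |w₀ i| :=
        Finset.single_le_sum (f := fun i => |w₀ i|) (fun i _ => abs_nonneg _) (Finset.mem_univ j)
      have hd4 : |θ.1 j| - |w₀ j| ≤ |θ.1 j - w₀ j| := abs_sub_abs_le_abs_sub _ _
      rw [hW]; linarith
    have hsubA : (θ.2 : Set (Fin p → ℝ)) ⊆ Metric.cthickening 1 (A₀ : Set (Fin p → ℝ)) := by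
      intro a ha
      have hetop : EMetric.hausdorffEdist (θ.2 : Set (Fin p → ℝ)) (A₀ : Set (Fin p → ℝ)) ≠ ⊤ :=
        Metric.hausdorffEdist_ne_top_of_nonempty_of_bounded θ.2.nonempty A₀.nonempty
          θ.2.isCompact.isBounded A₀.isCompact.isBounded
      have hid : Metric.infDist a (A₀ : Set (Fin p → ℝ)) ≤ Metric.hausdorffDist (θ.2 : Set (Fin p → ℝ)) A₀ :=
        Metric.infDist_le_hausdorffDist_of_mem ha hetop
      obtain ⟨a₀, ha₀, hda₀⟩ := A₀.isCompact.exists_infDist_eq_dist A₀.nonempty a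
      have hdle : dist a a₀ ≤ 1 := by
        rw [← hda₀]
        refine hid.trans (le_of_lt ?_)
        rw [← NonemptyCompacts.dist_eq]
        exact hθ2
      exact Metric.mem_cthickening_of_dist_le a a₀ 1 _ ha₀ hdle
    set x : (Fin p → ℝ) := X ω with hx
    set B : ℝ := 2 * W * (∑ j, x j ^ 2) + 2 * W * M * p with hB
    have hb1 : |∑ j, θ.1 j * (x j - μv j) ^ 2| ≤ B := hsum_bound θ.1 hwles x μv hMμ
    set I : Set ℝ := (fun a => ∑ j, θ.1 j * (x j - a j) ^ 2) '' (θ.2 : Set (Fin p → ℝ)) with hI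
    have hIne : I.Nonempty := θ.2.nonempty.image _
    have hIbd : ∀ b ∈ I, |b| ≤ B := by
      rintro b ⟨a, ha, rfl⟩
      exact hsum_bound θ.1 hwles x a (hMa a (hsubA ha))
    have hbdd : BddBelow I := ⟨-B, fun b hb => neg_le_of_abs_le (hIbd b hb)⟩
    have hInf_ge : -B ≤ sInf I := le_csInf hIne fun b hb => neg_le_of_abs_le (hIbd b hb)
    obtain ⟨b₀, hb₀⟩ := hIne
    have hInf_le : sInf I ≤ B := (csInf_le hbdd hb₀).trans (le_of_abs_le (hIbd b₀ hb₀))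
    rw [Real.norm_eq_abs]
    have habs : |sInf I| ≤ B := abs_le.mpr ⟨hInf_ge, hInf_le⟩
    have htri : |(∑ j, θ.1 j * (x j - μv j) ^ 2) - sInf I| ≤
        |∑ j, θ.1 j * (x j - μv j) ^ 2| + |sInf I| := abs_sub _ _
    have h2B : B + B = 4 * W * (∑ j, x j ^ 2) + 4 * W * M * p := by rw [hB]; ring
    calc |(∑ j, θ.1 j * (x j - μv j) ^ 2) - sInf I| ≤ B + B := by linarith
      _ = _ := h2B
  · -- integrability of the bound
    exact (hX2.const_mul (4 * W)).add (integrable_const _)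
  · -- continuity in the parameter
    apply Filter.Eventually.of_forall
    intro ω
    exact (hGcont.comp (continuous_id.prodMk continuous_const)).continuousAt
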